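/- arXiv:2408.10856 — 4 statements merged into one kernel-verified Lean document; each statement's English description precedes it below -/
import Mathlib

section
/- The reciprocal map is uniformly Hadamard differentiable: fix ε > 0 and let D_φ := {A : [a,b] → ℝ bounded : |A(x)| ≥ ε for all x}, with φ(A) := 1/A (pointwise), viewed as a map into the bounded functions with sup-norm. Then for all sequences tₙ → 0, Aₙ → A in sup-norm with Aₙ, Aₙ + tₙ αₙ ∈ D_φ, and αₙ → α in sup-norm, one has tₙ⁻¹(1/(Aₙ + tₙ αₙ) − 1/Aₙ) → −α/A² uniformly on [a,b]. -/
open Filter Topology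

lemma tuo_mul_bdd {f g : ℕ → ℝ → ℝ} {F G : ℝ → ℝ} {s : Set ℝ} {C : ℝ}
    (hf : TendstoUniformlyOn f F atTop s) (hg : TendstoUniformlyOn g G atTop s)
    (hF : ∀ x ∈ s, |F x| ≤ C) (hG : ∀ x ∈ s, |G x| ≤ C) :
    TendstoUniformlyOn (fun n x => f n x * g n x) (fun x => F x * G x) atTop s := by
  rw [Metric.tendstoUniformlyOn_iff] at hf hg ⊢
  intro η hη
  set C' := max C 0 with hC'
  have hC0 : (0:ℝ) ≤ C' := le_max_right _ _
  set δ := min 1 (η / (4 * (C' + 2))) with hδdef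
  have hδ : 0 < δ := lt_min one_pos (by positivity)
  filter_upwards [hf δ hδ, hg δ hδ] with n hfn hgn x hx
  have e1 : |F x - f n x| < δ := by have := hfn x hx; rwa [Real.dist_eq] at this
  have e2 : |G x - g n x| < δ := by have := hgn x hx; rwa [Real.dist_eq] at this
  have hFx : |F x| ≤ C' := le_trans (hF x hx) (le_max_left _ _)
  have hGx : |G x| ≤ C' := le_trans (hG x hx) (le_max_left _ _)
  have hfb : |f n x| ≤ C' + 1 := by
    have h := abs_sub_abs_le_abs_sub (f n x) (F x)
    rw [abs_sub_comm] at h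
    have hδ1 : δ ≤ 1 := min_le_left _ _
    linarith
  rw [Real.dist_eq]
  have key : F x * G x - f n x * g n x
      = (F x - f n x) * G x + f n x * (G x - g n x) := by ring
  have hb : |F x * G x - f n x * g n x|
      ≤ |F x - f n x| * |G x| + |f n x| * |G x - g n x| := by
    rw [key]
    exact (abs_add_le _ _).trans (by rw [abs_mul, abs_mul])
  have h1 : |F x - f n x| * |G x| ≤ δ * C' :=
    mul_le_mul e1.le hGx (abs_nonneg _) hδ.le
  have h2 : |f n x| * |G x - g n x| ≤ (C' + 1) * δ :=
    mul_le_mul hfb e2.le (abs_nonneg _) (by linarith)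
  have hδr : δ ≤ η / (4 * (C' + 2)) := min_le_right _ _
  have hfin : δ * C' + (C' + 1) * δ < η := by
    have h3 : δ * (2 * C' + 1) ≤ (η / (4 * (C' + 2))) * (2 * C' + 1) :=
      mul_le_mul_of_nonneg_right hδr (by linarith)
    have h4 : (η / (4 * (C' + 2))) * (2 * C' + 1) < η := by
      rw [div_mul_eq_mul_div, div_lt_iff₀ (by positivity)]
      nlinarith
    nlinarith
  linarith

lemma tuo_inv_bdd {f : ℕ → ℝ → ℝ} {F : ℝ → ℝ} {s : Set ℝ} {ε : ℝ} (hε : 0 < ε)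
    (hf : TendstoUniformlyOn f F atTop s)
    (hfl : ∀ n, ∀ x ∈ s, ε ≤ |f n x|) (hFl : ∀ x ∈ s, ε ≤ |F x|) :
    TendstoUniformlyOn (fun n x => (f n x)⁻¹) (fun x => (F x)⁻¹) atTop s := by
  rw [Metric.tendstoUniformlyOn_iff] at hf ⊢
  intro η hη
  have hδ : 0 < η * ε ^ 2 / 2 := by positivity
  filter_upwards [hf _ hδ] with n hfn x hx
  have e1 : |F x - f n x| < η * ε ^ 2 / 2 := by
    have := hfn x hx; rwa [Real.dist_eq] at this
  have hfx : ε ≤ |f n x| := hfl n x hx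
  have hFx : ε ≤ |F x| := hFl x hx
  have hf0 : f n x ≠ 0 := by
    intro h; rw [h, abs_zero] at hfx; linarith
  have hF0 : F x ≠ 0 := by
    intro h; rw [h, abs_zero] at hFx; linarith
  rw [Real.dist_eq]
  have key : (F x)⁻¹ - (f n x)⁻¹ = (f n x - F x) / (f n x * F x) := by
    rw [inv_sub_inv hF0 hf0, mul_comm]
  rw [key, abs_div, abs_mul]
  have hd : ε ^ 2 ≤ |f n x| * |F x| := by nlinarith
  rw [div_lt_iff₀ (by nlinarith)]
  have : |f n x - F x| < η * ε ^ 2 / 2 := by rwa [abs_sub_comm]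
  nlinarith

/-- The reciprocal map `A ↦ 1/A` on bounded functions on `[a,b]` that are bounded away
from zero (in absolute value by ε) is uniformly Hadamard differentiable, with derivative
`α ↦ -α/A²`, uniformly on `[a,b]`. -/
theorem reciprocal_uniformHadamard
    (a b ε : ℝ) (hε : 0 < ε)
    (A : ℝ → ℝ) (Aseq : ℕ → ℝ → ℝ) (α : ℝ → ℝ) (αseq : ℕ → ℝ → ℝ) (t : ℕ → ℝ)
    -- A is in the domain and bounded, α is bounded
    (hA : ∀ x ∈ Set.Icc a b, ε ≤ |A x|)
    (hAbdd : ∃ C, ∀ x ∈ Set.Icc a b, |A x| ≤ C)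
    (hαbdd : ∃ C, ∀ x ∈ Set.Icc a b, |α x| ≤ C)
    -- tₙ → 0, tₙ ≠ 0
    (ht : Tendsto t atTop (𝓝 0)) (ht0 : ∀ n, t n ≠ 0)
    -- Aₙ → A and αₙ → α in sup-norm on [a,b]
    (hAconv : TendstoUniformlyOn Aseq A atTop (Set.Icc a b))
    (hαconv : TendstoUniformlyOn αseq α atTop (Set.Icc a b))
    -- Aₙ and Aₙ + tₙ αₙ lie in the domain D_φ
    (hAn : ∀ n, ∀ x ∈ Set.Icc a b, ε ≤ |Aseq n x|)
    (hAn' : ∀ n, ∀ x ∈ Set.Icc a b, ε ≤ |Aseq n x + t n * αseq n x|) :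
    TendstoUniformlyOn
      (fun n x => (t n)⁻¹ * ((Aseq n x + t n * αseq n x)⁻¹ - (Aseq n x)⁻¹))
      (fun x => -(α x) / (A x) ^ 2) atTop (Set.Icc a b) := by
  obtain ⟨CA, hCA⟩ := hAbdd
  obtain ⟨Cα, hCα⟩ := hαbdd
  set s := Set.Icc a b
  -- Step 1: t n * αseq n → 0 uniformly
  have hzero : TendstoUniformlyOn (fun n x => t n * αseq n x) (fun _ => (0:ℝ))
      atTop s := by
    rw [Metric.tendstoUniformlyOn_iff] at hαconv ⊢
    intro η hη
    set C' := max Cα 0 with hC'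
    have hC0 : (0:ℝ) ≤ C' := le_max_right _ _
    have htn : ∀ᶠ n in atTop, |t n| < η / (C' + 1) := by
      have habs : Tendsto (fun n => |t n|) atTop (𝓝 0) := by
        simpa using ht.abs
      exact habs.eventually_lt_const (by positivity)
    filter_upwards [hαconv 1 one_pos, htn] with n hαn htn' x hx
    rw [Real.dist_eq]
    have e1 : |α x - αseq n x| < 1 := by
      have := hαn x hx; rwa [Real.dist_eq] at this
    have hαb : |αseq n x| ≤ C' + 1 := by
      have h := abs_sub_abs_le_abs_sub (αseq n x) (α x)
      rw [abs_sub_comm] at h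
      have : |α x| ≤ C' := le_trans (hCα x hx) (le_max_left _ _)
      linarith
    have : |t n * αseq n x| ≤ |t n| * (C' + 1) := by
      rw [abs_mul]; exact mul_le_mul_of_nonneg_left hαb (abs_nonneg _)
    have h2 : |t n| * (C' + 1) < η := by
      have := mul_lt_mul_of_pos_right htn' (show (0:ℝ) < C' + 1 by linarith)
      rwa [div_mul_cancel₀] at this
      linarith
    calc |0 - t n * αseq n x| = |t n * αseq n x| := by rw [zero_sub, abs_neg]
      _ ≤ |t n| * (C' + 1) := this
      _ < η := h2
  -- Step 2: B n := Aseq n + t n * αseq n → A uniformly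
  have hB : TendstoUniformlyOn (fun n x => Aseq n x + t n * αseq n x) A atTop s := by
    exact (hAconv.add hzero).congr_right fun x _ => by simp
  -- Step 3: B n * Aseq n → A * A uniformly
  have hBA : TendstoUniformlyOn
      (fun n x => (Aseq n x + t n * αseq n x) * Aseq n x)
      (fun x => A x * A x) atTop s :=
    tuo_mul_bdd hB hAconv hCA hCA
  -- Step 4: (B n * Aseq n)⁻¹ → (A*A)⁻¹ uniformly
  have hAA : ∀ x ∈ s, ε ^ 2 ≤ |A x * A x| := by
    intro x hx
    have := hA x hx
    rw [abs_mul]; nlinarith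
  have hinv : TendstoUniformlyOn
      (fun n x => ((Aseq n x + t n * αseq n x) * Aseq n x)⁻¹)
      (fun x => (A x * A x)⁻¹) atTop s := by
    refine tuo_inv_bdd (by positivity) hBA ?_ hAA
    intro n x hx
    rw [abs_mul]
    have h1 := hAn' n x hx
    have h2 := hAn n x hx
    nlinarith
  -- Step 5: multiply by -αseq n → -α
  have hαneg : TendstoUniformlyOn (fun n x => -αseq n x) (fun x => -α x) atTop s := by
    rw [Metric.tendstoUniformlyOn_iff] at hαconv ⊢
    intro η hη
    filter_upwards [hαconv η hη] with n h x hx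
    have := h x hx
    rw [Real.dist_eq] at this ⊢
    have e : -α x - -αseq n x = -(α x - αseq n x) := by ring
    rw [e, abs_neg]
    exact this
  have hmain : TendstoUniformlyOn
      (fun n x => -αseq n x * ((Aseq n x + t n * αseq n x) * Aseq n x)⁻¹)
      (fun x => -α x * (A x * A x)⁻¹) atTop s := by
    refine tuo_mul_bdd hαneg hinv (C := max Cα (ε^2)⁻¹) ?_ ?_
    · intro x hx
      rw [abs_neg]
      exact le_trans (hCα x hx) (le_max_left _ _)
    · intro x hx
      rw [abs_inv]
      refine le_trans ?_ (le_max_right _ _)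
      have h := hAA x hx
      rw [inv_le_inv₀ (by nlinarith) (by positivity)]
      exact h
  -- Step 6: identify functions
  have heq : ∀ᶠ n in atTop, Set.EqOn
      (fun x => -αseq n x * ((Aseq n x + t n * αseq n x) * Aseq n x)⁻¹)
      (fun x => (t n)⁻¹ * ((Aseq n x + t n * αseq n x)⁻¹ - (Aseq n x)⁻¹)) s := by
    refine Eventually.of_forall fun n x hx => ?_
    have h1 := hAn n x hx
    have h2 := hAn' n x hx
    have hA0 : Aseq n x ≠ 0 := by
      intro h; rw [h, abs_zero] at h1; linarith
    have hB0 : Aseq n x + t n * αseq n x ≠ 0 := by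
      intro h; rw [h, abs_zero] at h2; linarith
    have ht' := ht0 n
    beta_reduce
    have hAB : Aseq n x - (Aseq n x + t n * αseq n x) = t n * (-αseq n x) := by ring
    rw [inv_sub_inv hB0 hA0, div_eq_mul_inv, hAB, ← mul_assoc, ← mul_assoc,
      inv_mul_cancel₀ ht', one_mul]
  have hlim : Set.EqOn (fun x => -α x * (A x * A x)⁻¹)
      (fun x => -(α x) / (A x) ^ 2) s := by
    intro x _
    simp only
    rw [div_eq_mul_inv, sq]
  exact (hmain.congr heq).congr_right hlim
end

section
/- Continuity of the product-integral derivative in the base point (jump-sum estimate): let M > 0, K > 0, and suppose A, Aₙ are càdlàg functions on [a,b] of total variation ≤ M whose jumps satisfy 1 + ΔA(u) ≥ 1/K and 1 + ΔAₙ(u) ≥ 1/K for all u, and let α, αₙ be càdlàg with ‖αₙ − α‖_∞ → 0 and ‖Aₙ − A‖_∞ → 0. Then for every ε > 0 there exists a finite-variation function α̃ with ‖α − α̃‖_∞ < ε such that limsup_n sup_{t∈(a,b]} | Σ_{u ∈ D_{Aₙ} ∩ (a,t]} ΔAₙ(u)Δαₙ(u)/(1+ΔAₙ(u)) − Σ_{u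 ∈ D_A ∩ (a,t]} ΔA(u)Δα(u)/(1+ΔA(u)) | ≤ K²(8 max(M², 1) + 2‖α̃‖_{BV}) ε. -/
open Filter Topology

/-- The jump of `f` at `u`. -/
noncomputable def jump (f : ℝ → ℝ) (u : ℝ) : ℝ := f u - Function.leftLim f u

/-- `f` is càdlàg on `[a,b]`: right-continuous and with left limits. -/
def IsCadlagOn (a b : ℝ) (f : ℝ → ℝ) : Prop :=
  (∀ x ∈ Set.Ico a b, ContinuousWithinAt f (Set.Ici x) x) ∧
  (∀ x ∈ Set.Ioc a b, Tendsto f (𝓝[<] x) (𝓝 (Function.leftLim f x)))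

/-- The sum `Σ_{u ∈ D_f ∩ (a,s]} Δf(u)Δα(u)/(1+Δf(u))`; the terms vanish off the
set of discontinuities `D_f`, so it is written as a `tsum` over `(a,s]`. -/
noncomputable def jumpSum (f α : ℝ → ℝ) (a s : ℝ) : ℝ :=
  ∑' u : Set.Ioc a s, jump f u * jump α u / (1 + jump f u)

open Set

section Aux

lemma leftLim_eq' {g : ℝ → ℝ} {u L : ℝ} (h : Tendsto g (𝓝[<] u) (𝓝 L)) :
    Function.leftLim g u = L :=
  leftLim_eq_of_tendsto h

lemma tendsto_step (t c u : ℝ) :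
    Tendsto (fun x => if t ≤ x then c else 0) (𝓝[<] u) (𝓝 (if t < u then c else 0)) := by
  rcases lt_or_ge t u with h | h
  · rw [if_pos h]
    have he : (fun _ : ℝ => c) =ᶠ[𝓝[<] u] fun x => if t ≤ x then c else 0 := by
      filter_upwards [Ioo_mem_nhdsLT h] with x hx
      simp [hx.1.le]
    exact Tendsto.congr' he tendsto_const_nhds
  · rw [if_neg (not_lt.mpr h)]
    have he : (fun _ : ℝ => (0:ℝ)) =ᶠ[𝓝[<] u] fun x => if t ≤ x then c else 0 := by
      filter_upwards [self_mem_nhdsWithin] with x (hx : x < u)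
      simp [not_le.mpr (lt_of_lt_of_le hx h)]
    exact Tendsto.congr' he tendsto_const_nhds

lemma step_monotone {t c : ℝ} (hc : 0 ≤ c) : Monotone (fun x => if t ≤ x then c else 0) := by
  intro x y hxy
  dsimp only
  split_ifs with h1 h2 h2
  · exact le_rfl
  · exact absurd (h1.trans hxy) h2
  · exact hc
  · exact le_rfl

lemma eVariationOn_neg (f : ℝ → ℝ) (s : Set ℝ) :
    eVariationOn (fun x => - f x) s = eVariationOn f s := by
  simp only [eVariationOn, edist_neg_neg]

lemma boundedVariationOn_of_monotone {f : ℝ → ℝ} (hf : Monotone f) (a b : ℝ) :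
    BoundedVariationOn f (Set.Icc a b) := by
  have h := (hf.monotoneOn (univ : Set ℝ)).eVariationOn_le (mem_univ a) (mem_univ b)
  rw [univ_inter] at h
  exact (h.trans_lt ENNReal.ofReal_lt_top).ne

lemma boundedVariationOn_step (a b t c : ℝ) :
    BoundedVariationOn (fun x => if t ≤ x then c else 0) (Set.Icc a b) := by
  rcases le_total 0 c with hc | hc
  · exact boundedVariationOn_of_monotone (step_monotone hc) a b
  · have he : (fun x => if t ≤ x then c else 0) = fun x => - (if t ≤ x then -c else 0) := by
      funext x; split_ifs <;> ring
    rw [BoundedVariationOn, he, eVariationOn_neg]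
    exact boundedVariationOn_of_monotone (step_monotone (by linarith)) a b

lemma BoundedVariationOn.add' {f g : ℝ → ℝ} {s : Set ℝ}
    (hf : BoundedVariationOn f s) (hg : BoundedVariationOn g s) :
    BoundedVariationOn (fun x => f x + g x) s := by
  have key : eVariationOn (fun x => f x + g x) s ≤ eVariationOn f s + eVariationOn g s := by
    apply iSup_le _
    rintro ⟨n, ⟨u, hu, us⟩⟩
    calc ∑ i ∈ Finset.range n, edist (f (u (i+1)) + g (u (i+1))) (f (u i) + g (u i))
        ≤ ∑ i ∈ Finset.range n,
            (edist (f (u (i+1))) (f (u i)) + edist (g (u (i+1))) (g (u i))) :=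
          Finset.sum_le_sum fun i _ => edist_add_add_le _ _ _ _
      _ = (∑ i ∈ Finset.range n, edist (f (u (i+1))) (f (u i)))
            + ∑ i ∈ Finset.range n, edist (g (u (i+1))) (g (u i)) := Finset.sum_add_distrib
      _ ≤ _ := add_le_add (eVariationOn.sum_le (f := f) (n := n) hu us) (eVariationOn.sum_le (f := g) (n := n) hu us)
  exact ne_top_of_le_ne_top (ENNReal.add_ne_top.2 ⟨hf, hg⟩) key

lemma sum_abs_jump_le {f : ℝ → ℝ} {a b : ℝ} (hab : a ≤ b)
    (hll : ∀ u ∈ Set.Ioc a b, Tendsto f (𝓝[<] u) (𝓝 (Function.leftLim f u)))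
    (hfin : eVariationOn f (Set.Icc a b) ≠ ⊤)
    (F : Finset ℝ) (hF : ∀ u ∈ F, u ∈ Set.Ioc a b) :
    ∑ u ∈ F, |jump f u| ≤ (eVariationOn f (Set.Icc a b)).toReal := by
  classical
  have main : ∀ (F : Finset ℝ), ∀ t, t ∈ Set.Icc a b → (∀ u ∈ F, u ∈ Set.Ioc a t) →
      ∀ δ, 0 < δ → ∑ u ∈ F, |jump f u| ≤ (eVariationOn f (Set.Icc a t)).toReal + δ := by
    intro F
    induction F using Finset.induction_on_max with
    | empty =>
      intro t ht _ δ hδ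
      simp only [Finset.sum_empty]
      positivity
    | insert w F' hlt ih =>
      intro t ht hmem δ hδ
      have hw : w ∈ Set.Ioc a t := hmem w (Finset.mem_insert_self w F')
      have hwb : w ∈ Set.Ioc a b := ⟨hw.1, hw.2.trans ht.2⟩
      set L := Function.leftLim f w with hL
      have htend := hll w hwb
      have hev : ∀ᶠ x in 𝓝[<] w, |f x - L| < δ/2 := by
        have h2 := Metric.tendsto_nhds.mp htend (δ/2) (by linarith)
        filter_upwards [h2] with x hx
        rwa [Real.dist_eq] at hx
      rcases mem_nhdsLT_iff_exists_Ioo_subset.mp hev with ⟨lo, hlo, hsub⟩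
      have hlo' : lo < w := hlo
      set m := (insert a F').max' (Finset.insert_nonempty a F') with hm
      have hm_lt : m < w := by
        rw [hm]
        apply (Finset.max'_lt_iff _ _).mpr
        intro x hx
        rcases Finset.mem_insert.mp hx with rfl | hx'
        · exact hwb.1
        · exact hlt x hx'
      have ham : a ≤ m := Finset.le_max' _ a (Finset.mem_insert_self a F')
      obtain ⟨v, hv1, hv2⟩ := exists_between (max_lt hlo' hm_lt)
      have hav : a < v := lt_of_le_of_lt (ham.trans (le_max_right lo m)) hv1
      have hvt : v ≤ t := hv2.le.trans hw.2
      have hclose : |f v - L| < δ/2 :=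
        hsub ⟨lt_of_le_of_lt (le_max_left lo m) hv1, hv2⟩
      have hfin1 : eVariationOn f (Set.Icc a v) ≠ ⊤ :=
        ne_top_of_le_ne_top hfin (eVariationOn.mono f (Set.Icc_subset_Icc le_rfl (hvt.trans ht.2)))
      have hfin2 : eVariationOn f (Set.Icc v t) ≠ ⊤ :=
        ne_top_of_le_ne_top hfin (eVariationOn.mono f (Set.Icc_subset_Icc hav.le ht.2))
      have hjump : |jump f w| ≤ (eVariationOn f (Set.Icc v t)).toReal + δ/2 := by
        have hedist := eVariationOn.edist_le f (x := v) (y := w)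
          ⟨le_rfl, hvt⟩ ⟨hv2.le, hw.2⟩ (s := Set.Icc v t)
        have h1 : dist (f v) (f w) ≤ (eVariationOn f (Set.Icc v t)).toReal := by
          rw [dist_edist]
          exact ENNReal.toReal_mono hfin2 hedist
        have h2 : |f w - f v| ≤ (eVariationOn f (Set.Icc v t)).toReal := by
          rwa [Real.dist_eq, abs_sub_comm] at h1
        calc |jump f w| = |f w - L| := rfl
          _ ≤ |f w - f v| + |f v - L| := by
              have := abs_add_le (f w - f v) (f v - L)
              simpa using this
          _ ≤ (eVariationOn f (Set.Icc v t)).toReal + δ/2 := add_le_add h2 hclose.le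
      have hF'v : ∀ u ∈ F', u ∈ Set.Ioc a v := by
        intro u hu
        refine ⟨(hmem u (Finset.mem_insert_of_mem hu)).1, ?_⟩
        have : u ≤ m := Finset.le_max' _ u (Finset.mem_insert_of_mem hu)
        exact (this.trans ((le_max_right lo m).trans hv1.le))
      have hIH := ih v ⟨hav.le, hvt.trans ht.2⟩ hF'v (δ/2) (by linarith)
      have hw_notmem : w ∉ F' := fun h => lt_irrefl w (hlt w h)
      rw [Finset.sum_insert hw_notmem]
      have e1 : Set.Icc a t ∩ Set.Icc a v = Set.Icc a v :=
        Set.inter_eq_self_of_subset_right (Set.Icc_subset_Icc le_rfl hvt)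
      have e2 : Set.Icc a t ∩ Set.Icc v t = Set.Icc v t :=
        Set.inter_eq_self_of_subset_right (Set.Icc_subset_Icc hav.le le_rfl)
      have hsplit := eVariationOn.Icc_add_Icc f (a := a) (b := v) (c := t) hav.le hvt
        (s := Set.Icc a t) ⟨hav.le, hvt⟩
      rw [e1, e2, Set.inter_self] at hsplit
      calc |jump f w| + ∑ u ∈ F', |jump f u|
          ≤ ((eVariationOn f (Set.Icc v t)).toReal + δ/2)
            + ((eVariationOn f (Set.Icc a v)).toReal + δ/2) := add_le_add hjump hIH
        _ = ((eVariationOn f (Set.Icc a v)) + eVariationOn f (Set.Icc v t)).toReal + δ := by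
            rw [ENNReal.toReal_add hfin1 hfin2]; ring
        _ = (eVariationOn f (Set.Icc a t)).toReal + δ := by rw [hsplit]
  exact le_of_forall_pos_le_add (fun δ hδ => main F b ⟨hab, le_rfl⟩ hF δ hδ)

lemma summable_and_tsum_le {h : ℝ → ℝ} {a s C : ℝ}
    (hb : ∀ F : Finset ℝ, (∀ u ∈ F, u ∈ Set.Ioc a s) → ∑ u ∈ F, |h u| ≤ C) :
    Summable (fun u : Set.Ioc a s => |h ↑u|) ∧ ∑' u : Set.Ioc a s, |h ↑u| ≤ C := by
  have key : ∀ G : Finset (Set.Ioc a s), ∑ u ∈ G, |h ↑u| ≤ C := by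
    intro G
    have e : ∑ x ∈ G.image (Subtype.val), |h x| = ∑ u ∈ G, |h ↑u| :=
      Finset.sum_image (fun x _ y _ hxy => Subtype.coe_injective hxy)
    rw [← e]
    refine hb _ ?_
    intro x hx
    rcases Finset.mem_image.mp hx with ⟨u, _, rfl⟩
    exact u.2
  have hs : Summable (fun u : Set.Ioc a s => |h ↑u|) :=
    summable_of_sum_le (fun u => abs_nonneg _) key
  exact ⟨hs, Summable.tsum_le_of_sum_le hs key⟩

lemma abs_leftLim_sub_le {g h : ℝ → ℝ} {a b u d : ℝ} (hu : u ∈ Set.Ioc a b)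
    (hg : Tendsto g (𝓝[<] u) (𝓝 (Function.leftLim g u)))
    (hh : Tendsto h (𝓝[<] u) (𝓝 (Function.leftLim h u)))
    (hd : ∀ x ∈ Set.Icc a b, |g x - h x| ≤ d) :
    |Function.leftLim g u - Function.leftLim h u| ≤ d := by
  have ht : Tendsto (fun x => |g x - h x|) (𝓝[<] u)
      (𝓝 |Function.leftLim g u - Function.leftLim h u|) := (hg.sub hh).abs
  refine le_of_tendsto ht ?_
  filter_upwards [Ioo_mem_nhdsLT hu.1] with x hx
  exact hd x ⟨hx.1.le, hx.2.le.trans hu.2⟩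

lemma abs_jump_sub_le {g h : ℝ → ℝ} {a b u d : ℝ} (hu : u ∈ Set.Ioc a b)
    (hg : Tendsto g (𝓝[<] u) (𝓝 (Function.leftLim g u)))
    (hh : Tendsto h (𝓝[<] u) (𝓝 (Function.leftLim h u)))
    (hd : ∀ x ∈ Set.Icc a b, |g x - h x| ≤ d) :
    |jump g u - jump h u| ≤ 2 * d := by
  have h1 := abs_leftLim_sub_le hu hg hh hd
  have h2 := hd u ⟨hu.1.le, hu.2⟩
  have he : jump g u - jump h u
      = (g u - h u) - (Function.leftLim g u - Function.leftLim h u) := by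
    simp only [jump]; ring
  rw [he, sub_eq_add_neg]
  refine (abs_add_le _ _).trans ?_
  rw [abs_neg]
  linarith

lemma div_abs_bound {den D num d : ℝ} (hden : 0 < den) (hD : 1 ≤ D * den) (hnum : |num| ≤ d) :
    |num / den| ≤ D * d := by
  rw [abs_div, abs_of_pos hden, div_le_iff₀ hden]
  have h0 : 0 ≤ d := le_trans (abs_nonneg _) hnum
  nlinarith [mul_le_mul_of_nonneg_left hD h0]

lemma key_bound {K x y p q r d1 d2 d3 : ℝ} (hK : 0 < K) (hx : 1/K ≤ 1+x) (hy : 1/K ≤ 1+y)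
    (h1 : |p - r| ≤ d1) (h2 : |r - q| ≤ d2) (h3 : |x - y| ≤ d3) :
    |x*p/(1+x) - y*q/(1+y)| ≤ K*(|x| *d1) + K^2*(|r| *d3) + K*(|y| *d2) := by
  have hKinv : 0 < 1/K := by positivity
  have hxpos : 0 < 1 + x := lt_of_lt_of_le hKinv hx
  have hypos : 0 < 1 + y := lt_of_lt_of_le hKinv hy
  have hKK : K * (1/K) = 1 := mul_one_div_cancel hK.ne'
  have hK1x : 1 ≤ K * (1+x) := by
    calc 1 = K * (1/K) := hKK.symm
      _ ≤ K * (1+x) := mul_le_mul_of_nonneg_left hx hK.le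
  have hK1y : 1 ≤ K * (1+y) := by
    calc 1 = K * (1/K) := hKK.symm
      _ ≤ K * (1+y) := mul_le_mul_of_nonneg_left hy hK.le
  have hK2 : 1 ≤ K^2 * ((1+x)*(1+y)) := by
    have hmm := mul_le_mul hK1x hK1y zero_le_one (by positivity)
    calc (1:ℝ) = 1*1 := by ring
      _ ≤ (K*(1+x)) * (K*(1+y)) := hmm
      _ = K^2 * ((1+x)*(1+y)) := by ring
  have hid : x*p/(1+x) - y*q/(1+y)
      = (x*(p-r))/(1+x) + (r*(x-y))/((1+x)*(1+y)) + (y*(r-q))/(1+y) := by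
    field_simp
    ring
  have b1 : |(x*(p-r))/(1+x)| ≤ K*(|x| *d1) := by
    refine div_abs_bound hxpos hK1x ?_
    rw [abs_mul]
    exact mul_le_mul_of_nonneg_left h1 (abs_nonneg x)
  have b2 : |(r*(x-y))/((1+x)*(1+y))| ≤ K^2*(|r| *d3) := by
    refine div_abs_bound (mul_pos hxpos hypos) hK2 ?_
    rw [abs_mul]
    exact mul_le_mul_of_nonneg_left h3 (abs_nonneg r)
  have b3 : |(y*(r-q))/(1+y)| ≤ K*(|y| *d2) := by
    refine div_abs_bound hypos hK1y ?_
    rw [abs_mul]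
    exact mul_le_mul_of_nonneg_left h2 (abs_nonneg y)
  rw [hid]
  calc |(x*(p-r))/(1+x) + (r*(x-y))/((1+x)*(1+y)) + (y*(r-q))/(1+y)|
      ≤ |(x*(p-r))/(1+x) + (r*(x-y))/((1+x)*(1+y))| + |(y*(r-q))/(1+y)| := abs_add_le _ _
    _ ≤ |(x*(p-r))/(1+x)| + |(r*(x-y))/((1+x)*(1+y))| + |(y*(r-q))/(1+y)| := by
        have := abs_add_le ((x*(p-r))/(1+x)) ((r*(x-y))/((1+x)*(1+y)))
        linarith
    _ ≤ K*(|x| *d1) + K^2*(|r| *d3) + K*(|y| *d2) := by linarith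

lemma term_bound {K x p w : ℝ} (hK : 0 < K) (hx : 1/K ≤ 1+x) (hw : |p| ≤ w) :
    |x*p/(1+x)| ≤ K*(|x| * w) := by
  have hKinv : 0 < 1/K := by positivity
  have hxpos : 0 < 1 + x := lt_of_lt_of_le hKinv hx
  have hKK : K * (1/K) = 1 := mul_one_div_cancel hK.ne'
  have hK1x : 1 ≤ K * (1+x) := by
    calc 1 = K * (1/K) := hKK.symm
      _ ≤ K * (1+x) := mul_le_mul_of_nonneg_left hx hK.le
  refine div_abs_bound hxpos hK1x ?_
  rw [abs_mul]
  exact mul_le_mul_of_nonneg_left hw (abs_nonneg x)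

lemma exists_approx (a b : ℝ) (hab : a < b) (α : ℝ → ℝ) (hαc : IsCadlagOn a b α)
    (η : ℝ) (hη : 0 < η) :
    ∃ g : ℝ → ℝ, BoundedVariationOn g (Set.Icc a b) ∧
      (∀ u : ℝ, Tendsto g (𝓝[<] u) (𝓝 (Function.leftLim g u))) ∧
      (∀ x ∈ Set.Icc a b, |α x - g x| ≤ 2*η) := by
  classical
  set G : (ℝ → ℝ) → Prop := fun g => BoundedVariationOn g (Set.Icc a b) ∧
      ∀ u : ℝ, Tendsto g (𝓝[<] u) (𝓝 (Function.leftLim g u)) with hGdef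
  have Gconst : ∀ c : ℝ, G (fun _ => c) := by
    intro c
    constructor
    · have : eVariationOn (fun _ : ℝ => c) (Set.Icc a b) = 0 :=
        eVariationOn.constant_on (by
          intro x hx y hy
          rcases hx with ⟨x, -, rfl⟩
          rcases hy with ⟨y, -, rfl⟩
          rfl)
      rw [BoundedVariationOn, this]
      exact ENNReal.zero_ne_top
    · intro u
      have h : Tendsto (fun _ : ℝ => c) (𝓝[<] u) (𝓝 c) := tendsto_const_nhds
      rwa [leftLim_eq' h]
  have Gstep : ∀ g, G g → ∀ t c, G (fun x => g x + (if t ≤ x then c else 0)) := by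
    intro g hg t c
    constructor
    · exact BoundedVariationOn.add' hg.1 (boundedVariationOn_step a b t c)
    · intro u
      have h := (hg.2 u).add (tendsto_step t c u)
      rwa [leftLim_eq' h]
  set S : Set ℝ := {t | t ∈ Set.Icc a b ∧ ∃ g, G g ∧ (∀ x ∈ Set.Icc a t, |α x - g x| ≤ 2*η)
      ∧ (∀ x, t ≤ x → g x = g t)} with hSdef
  have haS : a ∈ S := by
    refine ⟨⟨le_rfl, hab.le⟩, fun _ => α a, Gconst _, ?_, fun x _ => rfl⟩
    intro x hx
    have hxa : x = a := le_antisymm hx.2 hx.1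
    rw [hxa, sub_self, abs_zero]
    positivity
  have hbdd : BddAbove S := ⟨b, fun t ht => ht.1.2⟩
  have hne : S.Nonempty := ⟨a, haS⟩
  set c0 := sSup S with hc0
  have hc0mem : c0 ∈ Set.Icc a b := ⟨le_csSup hbdd haS, csSup_le hne (fun t ht => ht.1.2)⟩
  have hc0S : c0 ∈ S := by
    rcases eq_or_lt_of_le hc0mem.1 with heq | hltac0
    · rwa [← heq]
    · have hll := hαc.2 c0 ⟨hltac0, hc0mem.2⟩
      set L := Function.leftLim α c0 with hLdef
      have hev : ∀ᶠ x in 𝓝[<] c0, |α x - L| ≤ η := by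
        have h2 := Metric.tendsto_nhds.mp hll η hη
        filter_upwards [h2] with x hx
        rw [Real.dist_eq] at hx
        exact hx.le
      rcases mem_nhdsLT_iff_exists_Ioo_subset.mp hev with ⟨lo, hlo, hsub⟩
      have hlo' : max lo a < c0 := max_lt hlo hltac0
      obtain ⟨t, htS, hta⟩ := exists_lt_of_lt_csSup hne hlo'
      have htc0 : t ≤ c0 := le_csSup hbdd htS
      rcases eq_or_lt_of_le htc0 with heq | htlt
      · exact heq ▸ htS
      obtain ⟨⟨hat, htb⟩, g, hG, happ, hconst⟩ := htS
      refine ⟨hc0mem,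
        fun x => (g x + (if t ≤ x then (L - g t) else 0)) + (if c0 ≤ x then (α c0 - L) else 0),
        Gstep _ (Gstep g hG t (L - g t)) c0 (α c0 - L), ?_, ?_⟩
      · intro x hx
        dsimp only
        rcases lt_or_ge x t with h1 | h1
        · rw [if_neg (not_le.mpr h1), if_neg (not_le.mpr (h1.trans htlt))]
          have := happ x ⟨hx.1, h1.le⟩
          calc |α x - (g x + 0 + 0)| = |α x - g x| := by ring_nf
            _ ≤ 2*η := this
        · rcases lt_or_ge x c0 with h2 | h2
          · rw [if_pos h1, if_neg (not_le.mpr h2), hconst x h1]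
            have hmem : x ∈ Set.Ioo lo c0 := ⟨lt_of_le_of_lt (le_max_left lo a) (hta.trans_le h1), h2⟩
            have hcl : |α x - L| ≤ η := hsub hmem
            calc |α x - (g t + (L - g t) + 0)| = |α x - L| := by ring_nf
              _ ≤ 2*η := by linarith
          · have hx2 : x = c0 := le_antisymm hx.2 h2
            rw [if_pos h1, if_pos h2, hconst x h1, hx2]
            calc |α c0 - (g t + (L - g t) + (α c0 - L))| = 0 := by ring_nf; simp
              _ ≤ 2*η := by positivity
      · intro x hx
        dsimp only
        have h1 : t ≤ x := htlt.le.trans hx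
        have h2 : t ≤ c0 := htlt.le
        rw [if_pos h1, if_pos hx, if_pos h2, if_pos (le_refl c0), hconst x h1, hconst c0 h2]
  have hc0b : c0 = b := by
    by_contra hnb
    have hc0lt : c0 < b := lt_of_le_of_ne hc0mem.2 hnb
    obtain ⟨-, g, hG, happ, hconst⟩ := hc0S
    have hrc : Tendsto α (𝓝[≥] c0) (𝓝 (α c0)) := hαc.1 c0 ⟨hc0mem.1, hc0lt⟩
    have hev : ∀ᶠ x in 𝓝[≥] c0, |α x - α c0| ≤ η := by
      have h2 := Metric.tendsto_nhds.mp hrc η hη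
      filter_upwards [h2] with x hx
      rw [Real.dist_eq] at hx
      exact hx.le
    rcases Metric.mem_nhdsWithin_iff.mp hev with ⟨δ, hδ, hsubball⟩
    set t' := min b (c0 + δ/2) with ht'
    have hc0t' : c0 < t' := lt_min hc0lt (by linarith)
    have ht'S : t' ∈ S := by
      refine ⟨⟨hc0mem.1.trans hc0t'.le, min_le_left _ _⟩,
        fun x => g x + (if c0 ≤ x then (α c0 - g c0) else 0),
        Gstep g hG c0 (α c0 - g c0), ?_, ?_⟩
      · intro x hx
        dsimp only
        rcases lt_or_ge x c0 with h1 | h1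
        · rw [if_neg (not_le.mpr h1)]
          have := happ x ⟨hx.1, h1.le⟩
          calc |α x - (g x + 0)| = |α x - g x| := by ring_nf
            _ ≤ 2*η := this
        · rw [if_pos h1, hconst x h1]
          have hxball : x ∈ Metric.ball c0 δ ∩ Set.Ici c0 := by
            constructor
            · rw [Metric.mem_ball, Real.dist_eq, abs_of_nonneg (by linarith)]
              have : x ≤ c0 + δ/2 := hx.2.trans (min_le_right _ _)
              linarith
            · exact h1
          have hcl : |α x - α c0| ≤ η := hsubball hxball
          calc |α x - (g c0 + (α c0 - g c0))| = |α x - α c0| := by ring_nf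
            _ ≤ 2*η := by linarith
      · intro x hx
        dsimp only
        have h1 : c0 ≤ x := hc0t'.le.trans hx
        rw [if_pos h1, if_pos hc0t'.le, hconst x h1, hconst t' hc0t'.le]
    exact absurd (le_csSup hbdd ht'S) (not_le.mpr hc0t')
  obtain ⟨-, g, hG, happ, -⟩ := hc0S
  rw [hc0b] at happ
  exact ⟨g, hG.1, hG.2, happ⟩

end Aux

/-- Continuity of the product-integral derivative in the base point: the jump-sum
estimate with an approximating finite-variation function `α̃`. -/
theorem jumpSum_estimate
    (a b M K : ℝ) (hab : a < b) (hM : 0 < M) (hK : 0 < K)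
    (A α : ℝ → ℝ) (Aseq αseq : ℕ → ℝ → ℝ)
    (hAc : IsCadlagOn a b A) (hAnc : ∀ n, IsCadlagOn a b (Aseq n))
    (hαc : IsCadlagOn a b α) (hαnc : ∀ n, IsCadlagOn a b (αseq n))
    (hABV : eVariationOn A (Set.Icc a b) ≤ ENNReal.ofReal M)
    (hAnBV : ∀ n, eVariationOn (Aseq n) (Set.Icc a b) ≤ ENNReal.ofReal M)
    (hAjump : ∀ u ∈ Set.Ioc a b, 1 / K ≤ 1 + jump A u)
    (hAnjump : ∀ n, ∀ u ∈ Set.Ioc a b, 1 / K ≤ 1 + jump (Aseq n) u)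
    (hαconv : TendstoUniformlyOn αseq α atTop (Set.Icc a b))
    (hAconv : TendstoUniformlyOn Aseq A atTop (Set.Icc a b)) :
    ∀ ε > (0:ℝ), ∃ αt : ℝ → ℝ,
      BoundedVariationOn αt (Set.Icc a b) ∧
      (∀ x ∈ Set.Icc a b, |α x - αt x| < ε) ∧
      Filter.limsup
          (fun n => ⨆ s : Set.Ioc a b, |jumpSum (Aseq n) (αseq n) a s - jumpSum A α a s|)
          atTop ≤
        K ^ 2 * (8 * max (M ^ 2) 1 + 2 * (eVariationOn αt (Set.Icc a b)).toReal) * ε := by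
  intro ε hε
  haveI : Nonempty (Set.Ioc a b) := ⟨⟨b, hab, le_rfl⟩⟩
  -- variation bounds as finite jump sums
  have toRealM : ∀ {f : ℝ → ℝ}, eVariationOn f (Set.Icc a b) ≤ ENNReal.ofReal M →
      (eVariationOn f (Set.Icc a b)).toReal ≤ M := by
    intro f hf
    calc (eVariationOn f (Set.Icc a b)).toReal ≤ (ENNReal.ofReal M).toReal :=
          ENNReal.toReal_mono ENNReal.ofReal_ne_top hf
      _ = M := ENNReal.toReal_ofReal hM.le
  have hMA : ∀ (F : Finset ℝ), (∀ u ∈ F, u ∈ Set.Ioc a b) → ∑ u ∈ F, |jump A u| ≤ M := by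
    intro F hF
    exact (sum_abs_jump_le hab.le hAc.2
      (ne_top_of_le_ne_top ENNReal.ofReal_ne_top hABV) F hF).trans (toRealM hABV)
  have hMAn : ∀ n (F : Finset ℝ), (∀ u ∈ F, u ∈ Set.Ioc a b) →
      ∑ u ∈ F, |jump (Aseq n) u| ≤ M := by
    intro n F hF
    exact (sum_abs_jump_le hab.le (hAnc n).2
      (ne_top_of_le_ne_top ENNReal.ofReal_ne_top (hAnBV n)) F hF).trans (toRealM (hAnBV n))
  -- K ≥ 1
  have hK1 : 1 ≤ K := by
    by_contra hcon
    push_neg at hcon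
    have hc : 0 < 1/K - 1 := by
      have := one_lt_one_div hK hcon
      linarith
    obtain ⟨n, hn⟩ := exists_nat_gt (M / (1/K - 1))
    set gp : ℕ → ℝ := fun i => b - (b - a)/(i + 2) with hgp
    have hgpmono : StrictMono gp := by
      intro i j hij
      have h2 : (0:ℝ) < (i:ℝ) + 2 := by positivity
      have hij' : (i:ℝ) < (j:ℝ) := Nat.cast_lt.mpr hij
      have hd : (b - a)/((j:ℝ)+2) < (b - a)/((i:ℝ)+2) :=
        div_lt_div_of_pos_left (by linarith) h2 (by linarith)
      simp only [hgp]
      push_cast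
      linarith
    have hgpmem : ∀ i, gp i ∈ Set.Ioc a b := by
      intro i
      have h2 : (0:ℝ) < (i:ℝ) + 2 := by positivity
      have hdiv : (b - a)/((i:ℝ)+2) < b - a := div_lt_self (by linarith) (by linarith)
      have hdiv0 : 0 ≤ (b - a)/((i:ℝ)+2) := div_nonneg (by linarith) h2.le
      constructor
      · simp only [hgp]; push_cast; linarith
      · simp only [hgp]; push_cast; linarith
    set F := (Finset.range n).image gp with hF
    have hcard : F.card = n := by
      rw [hF, Finset.card_image_of_injective _ hgpmono.injective, Finset.card_range]
    have hsum := hMA F (by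
      intro u hu
      rw [hF] at hu
      rcases Finset.mem_image.mp hu with ⟨i, _, rfl⟩
      exact hgpmem i)
    have hlow : (n:ℝ) * (1/K - 1) ≤ ∑ u ∈ F, |jump A u| := by
      have hper : ∀ u ∈ F, 1/K - 1 ≤ |jump A u| := by
        intro u hu
        rw [hF] at hu
        rcases Finset.mem_image.mp hu with ⟨i, _, rfl⟩
        have hj := hAjump (gp i) (hgpmem i)
        have h1 : 1/K - 1 ≤ jump A (gp i) := by linarith
        exact h1.trans (le_abs_self _)
      calc (n:ℝ) * (1/K - 1) = (F.card : ℝ) * (1/K-1) := by rw [hcard]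
        _ = ∑ _u ∈ F, (1/K - 1) := by rw [Finset.sum_const, nsmul_eq_mul]
        _ ≤ ∑ u ∈ F, |jump A u| := Finset.sum_le_sum hper
    rw [div_lt_iff₀ hc] at hn
    linarith
  -- the approximation
  obtain ⟨g, hgBV, hgll, happ⟩ := exists_approx a b hab α hαc (ε/4) (by linarith)
  have happ2 : ∀ x ∈ Set.Icc a b, |α x - g x| ≤ ε/2 := by
    intro x hx
    have := happ x hx
    linarith
  set Vt := (eVariationOn g (Set.Icc a b)).toReal with hVtdef
  have hVt : 0 ≤ Vt := ENNReal.toReal_nonneg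
  have hMg : ∀ (F : Finset ℝ), (∀ u ∈ F, u ∈ Set.Ioc a b) → ∑ u ∈ F, |jump g u| ≤ Vt :=
    fun F hF => sum_abs_jump_le hab.le (fun u _ => hgll u) hgBV F hF
  refine ⟨g, hgBV, fun x hx => lt_of_le_of_lt (happ2 x hx) (by linarith), ?_⟩
  set mx := max (M^2) 1 with hmx
  have hmx0 : (0:ℝ) ≤ mx := le_trans zero_le_one (le_max_right _ _)
  have hmax : M ≤ mx := by
    rcases le_total M 1 with h | h
    · exact h.trans (le_max_right _ _)
    · exact le_trans (by nlinarith) (le_max_left (M^2) 1)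
  set D := K*(M*(2*ε)) + K^2*(Vt*ε) + K*(M*ε) with hD
  have hDle : D ≤ K ^ 2 * (8 * mx + 2 * Vt) * ε := by
    have hKM : K*M ≤ K^2 * mx := by
      nlinarith [mul_le_mul_of_nonneg_left hK1 hK.le,
        mul_le_mul_of_nonneg_left hmax (mul_nonneg hK.le hK.le)]
    nlinarith [mul_le_mul_of_nonneg_right hKM hε.le,
      mul_nonneg (mul_nonneg (mul_nonneg hK.le hK.le) hVt) hε.le,
      mul_nonneg (mul_nonneg (mul_nonneg hK.le hK.le) hmx0) hε.le]
  -- limsup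
  apply Filter.limsup_le_of_le
  · exact Filter.isCoboundedUnder_le_of_le atTop
      (fun n => Real.iSup_nonneg (fun s => abs_nonneg _))
  · have hαev := Metric.tendstoUniformlyOn_iff.mp hαconv (ε/2) (by linarith)
    have hAev := Metric.tendstoUniformlyOn_iff.mp hAconv (ε/2) (by linarith)
    filter_upwards [hαev, hAev] with n hαn hAn
    refine ciSup_le fun sp => le_trans ?_ hDle
    obtain ⟨s, hs⟩ := sp
    simp only
    have hsb : s ≤ b := hs.2
    have hsubu : ∀ u : Set.Ioc a s, (u : ℝ) ∈ Set.Ioc a b :=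
      fun u => ⟨u.2.1, u.2.2.trans hsb⟩
    -- uniform closeness
    have hαng : ∀ x ∈ Set.Icc a b, |αseq n x - g x| ≤ ε := by
      intro x hx
      have h1 := hαn x hx
      rw [Real.dist_eq] at h1
      have h2 := happ2 x hx
      calc |αseq n x - g x| ≤ |αseq n x - α x| + |α x - g x| := abs_sub_le _ _ _
        _ ≤ ε := by rw [abs_sub_comm]; linarith
    have hgα : ∀ x ∈ Set.Icc a b, |g x - α x| ≤ ε/2 := by
      intro x hx
      rw [abs_sub_comm]
      exact happ2 x hx
    have hAnA : ∀ x ∈ Set.Icc a b, |Aseq n x - A x| ≤ ε/2 := by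
      intro x hx
      have h1 := hAn x hx
      rw [Real.dist_eq, abs_sub_comm] at h1
      exact h1.le
    -- jump difference bounds
    have hd1 : ∀ u : Set.Ioc a s, |jump (αseq n) ↑u - jump g ↑u| ≤ 2*ε :=
      fun u => abs_jump_sub_le (hsubu u) ((hαnc n).2 ↑u (hsubu u)) (hgll ↑u) hαng
    have hd2 : ∀ u : Set.Ioc a s, |jump g ↑u - jump α ↑u| ≤ ε := by
      intro u
      have := abs_jump_sub_le (hsubu u) (hgll ↑u) (hαc.2 ↑u (hsubu u)) hgα
      linarith
    have hd3 : ∀ u : Set.Ioc a s, |jump (Aseq n) ↑u - jump A ↑u| ≤ ε := by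
      intro u
      have := abs_jump_sub_le (hsubu u) ((hAnc n).2 ↑u (hsubu u)) (hAc.2 ↑u (hsubu u)) hAnA
      linarith
    -- summability of jump families
    have SxA := summable_and_tsum_le (h := jump (Aseq n)) (a := a) (s := s) (C := M)
      (fun F hF => hMAn n F (fun u hu => ⟨(hF u hu).1, (hF u hu).2.trans hsb⟩))
    have SyA := summable_and_tsum_le (h := jump A) (a := a) (s := s) (C := M)
      (fun F hF => hMA F (fun u hu => ⟨(hF u hu).1, (hF u hu).2.trans hsb⟩))
    have Sr := summable_and_tsum_le (h := jump g) (a := a) (s := s) (C := Vt)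
      (fun F hF => hMg F (fun u hu => ⟨(hF u hu).1, (hF u hu).2.trans hsb⟩))
    have hxM : ∀ u : Set.Ioc a s, |jump (Aseq n) ↑u| ≤ M := by
      intro u
      have := hMAn n {(u : ℝ)} (by
        intro z hz
        rw [Finset.mem_singleton] at hz
        rw [hz]
        exact hsubu u)
      simpa using this
    have hyM : ∀ u : Set.Ioc a s, |jump A ↑u| ≤ M := by
      intro u
      have := hMA {(u : ℝ)} (by
        intro z hz
        rw [Finset.mem_singleton] at hz
        rw [hz]
        exact hsubu u)
      simpa using this
    -- summability of the two term families
    have hsum_n : Summable (fun u : Set.Ioc a s =>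
        jump (Aseq n) ↑u * jump (αseq n) ↑u / (1 + jump (Aseq n) ↑u)) := by
      apply Summable.of_norm_bounded
        (g := fun u : Set.Ioc a s => (K*(2*ε)) * |jump (Aseq n) ↑u| + (K*M) * |jump g ↑u|)
        ((SxA.1.mul_left (K*(2*ε))).add (Sr.1.mul_left (K*M)))
      intro u
      rw [Real.norm_eq_abs]
      have hp : |jump (αseq n) ↑u| ≤ 2*ε + |jump g ↑u| := by
        calc |jump (αseq n) ↑u| = |(jump (αseq n) ↑u - jump g ↑u) + jump g ↑u| := by ring_nf
          _ ≤ |jump (αseq n) ↑u - jump g ↑u| + |jump g ↑u| := abs_add_le _ _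
          _ ≤ 2*ε + |jump g ↑u| := by have := hd1 u; linarith
      have h1 := term_bound hK (hAnjump n ↑u (hsubu u)) hp
      have h2 := hxM u
      have h3 : K * (|jump (Aseq n) ↑u| * |jump g ↑u|) ≤ K * (M * |jump g ↑u|) :=
        mul_le_mul_of_nonneg_left (mul_le_mul_of_nonneg_right h2 (abs_nonneg _)) hK.le
      nlinarith [h1, h3, abs_nonneg (jump (Aseq n) (u : ℝ)), hε.le]
    have hsum_l : Summable (fun u : Set.Ioc a s =>
        jump A ↑u * jump α ↑u / (1 + jump A ↑u)) := by
      apply Summable.of_norm_bounded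
        (g := fun u : Set.Ioc a s => (K*ε) * |jump A ↑u| + (K*M) * |jump g ↑u|)
        ((SyA.1.mul_left (K*ε)).add (Sr.1.mul_left (K*M)))
      intro u
      rw [Real.norm_eq_abs]
      have hp : |jump α ↑u| ≤ ε + |jump g ↑u| := by
        calc |jump α ↑u| = |-(jump g ↑u - jump α ↑u) + jump g ↑u| := by ring_nf
          _ ≤ |-(jump g ↑u - jump α ↑u)| + |jump g ↑u| := abs_add_le _ _
          _ ≤ ε + |jump g ↑u| := by rw [abs_neg]; have := hd2 u; linarith
      have h1 := term_bound hK (hAjump ↑u (hsubu u)) hp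
      have h2 := hyM u
      have h3 : K * (|jump A ↑u| * |jump g ↑u|) ≤ K * (M * |jump g ↑u|) :=
        mul_le_mul_of_nonneg_left (mul_le_mul_of_nonneg_right h2 (abs_nonneg _)) hK.le
      nlinarith [h1, h3, abs_nonneg (jump A (u : ℝ)), hε.le]
    -- the difference of sums
    have hdiff : jumpSum (Aseq n) (αseq n) a s - jumpSum A α a s
        = ∑' u : Set.Ioc a s, (jump (Aseq n) ↑u * jump (αseq n) ↑u / (1 + jump (Aseq n) ↑u)
            - jump A ↑u * jump α ↑u / (1 + jump A ↑u)) := by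
      rw [jumpSum, jumpSum, ← Summable.tsum_sub hsum_n hsum_l]
    have hkey : ∀ u : Set.Ioc a s,
        |jump (Aseq n) ↑u * jump (αseq n) ↑u / (1 + jump (Aseq n) ↑u)
          - jump A ↑u * jump α ↑u / (1 + jump A ↑u)|
        ≤ K*(|jump (Aseq n) ↑u| * (2*ε)) + K^2*(|jump g ↑u| * ε) + K*(|jump A ↑u| * ε) :=
      fun u => key_bound hK (hAnjump n ↑u (hsubu u)) (hAjump ↑u (hsubu u))
        (hd1 u) (hd2 u) (hd3 u)
    set Bd : Set.Ioc a s → ℝ := fun u =>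
      K*(|jump (Aseq n) ↑u| * (2*ε)) + K^2*(|jump g ↑u| * ε) + K*(|jump A ↑u| * ε) with hBd
    have hS1 : Summable (fun u : Set.Ioc a s => K*(|jump (Aseq n) ↑u| * (2*ε))) :=
      (SxA.1.mul_right (2*ε)).mul_left K
    have hS2 : Summable (fun u : Set.Ioc a s => K^2*(|jump g ↑u| * ε)) :=
      (Sr.1.mul_right ε).mul_left (K^2)
    have hS3 : Summable (fun u : Set.Ioc a s => K*(|jump A ↑u| * ε)) :=
      (SyA.1.mul_right ε).mul_left K
    have hBdsum : Summable Bd := (hS1.add hS2).add hS3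
    have hsub := hsum_n.sub hsum_l
    have habs : |∑' u : Set.Ioc a s, (jump (Aseq n) ↑u * jump (αseq n) ↑u / (1 + jump (Aseq n) ↑u)
            - jump A ↑u * jump α ↑u / (1 + jump A ↑u))| ≤ ∑' u, Bd u := by
      calc |∑' u : Set.Ioc a s, (jump (Aseq n) ↑u * jump (αseq n) ↑u / (1 + jump (Aseq n) ↑u)
            - jump A ↑u * jump α ↑u / (1 + jump A ↑u))|
          ≤ ∑' u : Set.Ioc a s, |jump (Aseq n) ↑u * jump (αseq n) ↑u / (1 + jump (Aseq n) ↑u)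
            - jump A ↑u * jump α ↑u / (1 + jump A ↑u)| := by
            have := norm_tsum_le_tsum_norm (f := fun u : Set.Ioc a s =>
              (jump (Aseq n) ↑u * jump (αseq n) ↑u / (1 + jump (Aseq n) ↑u)
                - jump A ↑u * jump α ↑u / (1 + jump A ↑u))) (by
                  simpa [Real.norm_eq_abs] using hsub.abs)
            simpa [Real.norm_eq_abs] using this
        _ ≤ ∑' u, Bd u := Summable.tsum_le_tsum hkey hsub.abs hBdsum
    have htsum_Bd : ∑' u, Bd u ≤ D := by
      have e0 : ∑' u, Bd u = (∑' u : Set.Ioc a s, K*(|jump (Aseq n) ↑u| * (2*ε)))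
          + (∑' u : Set.Ioc a s, K^2*(|jump g ↑u| * ε))
          + (∑' u : Set.Ioc a s, K*(|jump A ↑u| * ε)) := by
        rw [hBd, Summable.tsum_add (hS1.add hS2) hS3, Summable.tsum_add hS1 hS2]
      rw [e0, hD]
      have e1 : ∑' u : Set.Ioc a s, K*(|jump (Aseq n) ↑u| * (2*ε)) ≤ K*(M*(2*ε)) := by
        rw [tsum_mul_left]
        apply mul_le_mul_of_nonneg_left _ hK.le
        rw [tsum_mul_right]
        exact mul_le_mul_of_nonneg_right SxA.2 (by positivity)
      have e2 : ∑' u : Set.Ioc a s, K^2*(|jump g ↑u| * ε) ≤ K^2*(Vt*ε) := by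
        rw [tsum_mul_left]
        apply mul_le_mul_of_nonneg_left _ (by positivity)
        rw [tsum_mul_right]
        exact mul_le_mul_of_nonneg_right Sr.2 hε.le
      have e3 : ∑' u : Set.Ioc a s, K*(|jump A ↑u| * ε) ≤ K*(M*ε) := by
        rw [tsum_mul_left]
        apply mul_le_mul_of_nonneg_left _ hK.le
        rw [tsum_mul_right]
        exact mul_le_mul_of_nonneg_right SyA.2 hε.le
      linarith
    rw [hdiff]
    exact habs.trans htsum_Bd
end

section
/- Counterexample to uniform Hadamard differentiability of the quantile (inverse) map: define A(x) = x on [0,2]; Aₙ(x) = x − 1/√n for x ≤ 1 − 1/√n, Aₙ(x) = 2x − 1 for 1 − 1/√n < x < 1 + 1/√n, and Aₙ(x) = x + 1/√n for x ≥ 1 + 1/√n; let αₙ = α ≡ 1, p = 1, tₙ = 1/√n. Then: (i) ‖Aₙ − A‖_∞ → 0; (ii) for every n ≥ 1, (Aₙ + tₙ αₙ)(1 − tₙ/2) = 1 and Aₙ(1) = 1, so with Φ_p(Aₙ + tₙ αₙ) = 1 − tₙ/2 and Φ_p(Aₙ) = 1 one has (Φ_p(Aₙ + tₙ αₙ) −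 Φ_p(Aₙ))/tₙ = −1/2; (iii) the Hadamard derivative value −α(Φ_p(A))/A'(Φ_p(A)) equals −1. Hence −1/2 ≠ −1 and the inverse map fails to be uniformly Hadamard differentiable at A tangentially to the constant function 1. -/
open Filter Topology

/-- The sequence `Aₙ` of the counterexample to uniform Hadamard differentiability
of the inverse (quantile) map. -/
noncomputable def Aseq (n : ℕ) (x : ℝ) : ℝ :=
  if x ≤ 1 - 1 / Real.sqrt n then x - 1 / Real.sqrt n
  else if x < 1 + 1 / Real.sqrt n then 2 * x - 1
  else x + 1 / Real.sqrt n

/-- Counterexample to uniform Hadamard differentiability of the inverse map: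
with `A = id` on `[0,2]`, `αₙ = α ≡ 1`, `p = 1`, `tₙ = 1/√n`, one has
(i) `‖Aₙ − A‖_∞ = 1/√n → 0`; (ii) `(Aₙ + tₙ·1)(1 − tₙ/2) = 1` and `Aₙ(1) = 1`, so the
difference quotient of the quantiles equals `−1/2`; (iii) the Hadamard derivative value
`−α(1)/A'(1) = −1`, and `−1/2 ≠ −1`. -/
theorem inverse_map_not_uniformHadamard :
    (∀ n : ℕ, 1 ≤ n → ∀ x ∈ Set.Icc (0:ℝ) 2, |Aseq n x - x| ≤ 1 / Real.sqrt n) ∧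
    Tendsto (fun n : ℕ => 1 / Real.sqrt n) atTop (𝓝 0) ∧
    (∀ n : ℕ, 1 ≤ n →
      Aseq n (1 - 1 / (2 * Real.sqrt n)) + 1 / Real.sqrt n = 1 ∧
      Aseq n 1 = 1 ∧
      ((1 - (1 / Real.sqrt n) / 2) - 1) / (1 / Real.sqrt n) = -(1/2)) ∧
    -(1:ℝ) / 1 = -1 ∧
    (-(1/2) : ℝ) ≠ -1 := by
  have hs : ∀ n : ℕ, 1 ≤ n → 0 < 1 / Real.sqrt n := by
    intro n hn
    have : (0:ℝ) < Real.sqrt n := Real.sqrt_pos.mpr (by exact_mod_cast hn)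
    positivity
  refine ⟨?_, ?_, ?_, by norm_num, by norm_num⟩
  · intro n hn x _
    set s := 1 / Real.sqrt n with hsdef
    have hspos := hs n hn
    unfold Aseq
    split_ifs with h1 h2
    · rw [show x - s - x = -s by ring, abs_neg, abs_of_pos hspos]
    · push_neg at h1
      rw [show 2 * x - 1 - x = x - 1 by ring, abs_le]
      constructor <;> [linarith; linarith [h2]]
    · rw [show x + s - x = s by ring, abs_of_pos hspos]
  · have h1 : Tendsto (fun x : ℝ => x ^ (-(1/2) : ℝ)) atTop (𝓝 0) :=
      tendsto_rpow_neg_atTop (by norm_num)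
    have h2 := h1.comp tendsto_natCast_atTop_atTop
    refine h2.congr fun n => ?_
    simp only [Function.comp_apply, Real.rpow_neg (Nat.cast_nonneg n),
      Real.sqrt_eq_rpow, one_div]
  · intro n hn
    set s := 1 / Real.sqrt n with hsdef
    have hspos := hs n hn
    have hs2 : 1 / (2 * Real.sqrt n) = s / 2 := by
      rw [hsdef]
      have : Real.sqrt n ≠ 0 := ne_of_gt (Real.sqrt_pos.mpr (by exact_mod_cast hn))
      field_simp
    refine ⟨?_, ?_, ?_⟩
    · unfold Aseq
      rw [hs2]
      rw [if_neg (by linarith), if_pos (by linarith)]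
      ring
    · unfold Aseq
      rw [if_neg (by linarith), if_pos (by linarith)]
      ring
    · field_simp
      have hs0 : s ≠ 0 := ne_of_gt hspos
      rw [show (2 - s - 2) = -s by ring, neg_div, div_self hs0]
end

section
/- Uniform Hadamard differentiability of the inverse map under an increment control condition (Lemma S.5): let Aₙ, A be nondecreasing càdlàg functions in the domain of Φ_p with A continuously differentiable at ξ_p := Φ_p(A) ∈ (a,b) with A'(ξ_p) > 0 and A(ξ_p) = p. Suppose √n ‖Aₙ − A‖_∞ ≤ M for some M > 0 and √n sup_{|x| ≤ K/√n} |Aₙ(ξ_p + x) − Aₙ(ξ_p) − A(ξ_p + x) + A(ξ_p)| → 0 for every K > 0. Then for every sequence αₙ → α in sup-norm with α bounded and continuous at ξ_p and Aₙ + n^{−1/2} αₙ in the domain of Φ_p, one has √n (Φ_p(Aₙ + n^{−1/2} αₙ) − Φ_p(Aₙ)) → −α(ξ_p)/A'(ξ_p). -/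
open Filter Topology

lemma monotoneOn_le_of_leftLim_le {f : ℝ → ℝ} {a b t s p : ℝ}
    (hf : MonotoneOn f (Set.Icc a b)) (ht : t ∈ Set.Ioc a b)
    (hs : s ∈ Set.Icc a b) (hst : s < t)
    (hp : Function.leftLim f t ≤ p) : f s ≤ p := by
  have hab : a ≤ b := hs.1.trans hs.2
  set g : ℝ → ℝ := fun z => f (max a (min z b)) with hg
  have hgmono : Monotone g := by
    intro u v huv
    exact hf ⟨le_max_left _ _, max_le hab (min_le_right _ _)⟩
      ⟨le_max_left _ _, max_le hab (min_le_right _ _)⟩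
      (max_le_max le_rfl (min_le_min huv le_rfl))
  have heq : ∀ z ∈ Set.Icc a b, g z = f z := by
    intro z hz
    have h1 : min z b = z := min_eq_left hz.2
    have h2 : max a z = z := max_eq_right hz.1
    simp [hg, h1, h2]
  have hev : g =ᶠ[𝓝[<] t] f :=
    eventually_of_mem (Ioo_mem_nhdsLT_of_mem ⟨ht.1, le_rfl⟩)
      (fun z hz => heq z ⟨hz.1.le, hz.2.le.trans ht.2⟩)
  have h1 : Tendsto g (𝓝[<] t) (𝓝 (Function.leftLim g t)) := hgmono.tendsto_leftLim t
  have h2 : Tendsto f (𝓝[<] t) (𝓝 (Function.leftLim g t)) := h1.congr' hev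
  have h3 : Function.leftLim f t = Function.leftLim g t :=
    leftLim_eq_of_tendsto h2
  calc f s = g s := (heq s hs).symm
    _ ≤ Function.leftLim g t := hgmono.le_leftLim hst
    _ = Function.leftLim f t := h3.symm
    _ ≤ p := hp

set_option maxHeartbeats 3200000 in
/-- Uniform Hadamard differentiability of the inverse (quantile) map under an
increment control condition (Lemma S.5 of Ditzhaus et al.):
`√n (Φ_p(Aₙ + n^{−1/2} αₙ) − Φ_p(Aₙ)) → −α(ξ_p)/A'(ξ_p)`. -/
theorem inverse_map_uniformHadamard_incrementControl
    (a b p M : ℝ) (hM : 0 < M) (ξp : ℝ) (hξp : ξp ∈ Set.Ioo a b)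
    (A α : ℝ → ℝ) (Aseq αseq : ℕ → ℝ → ℝ) (x y : ℕ → ℝ)
    -- A, Aₙ are nondecreasing on [a,b]
    (hAmono : MonotoneOn A (Set.Icc a b))
    (hAnmono : ∀ n, MonotoneOn (Aseq n) (Set.Icc a b))
    -- Aₙ + n^{-1/2} αₙ is nondecreasing on [a,b] (lies in the domain of Φ_p)
    (hAtnmono : ∀ n,
      MonotoneOn (fun z => Aseq n z + (Real.sqrt n)⁻¹ * αseq n z) (Set.Icc a b))
    -- A is continuously differentiable at ξ_p with positive derivative, A(ξ_p) = p
    (hdiff : ∃ U ∈ 𝓝 ξp, ∀ z ∈ U, DifferentiableAt ℝ A z)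
    (hderivcont : ContinuousAt (deriv A) ξp)
    (hderivpos : 0 < deriv A ξp)
    (hAξ : A ξp = p)
    -- √n ‖Aₙ − A‖_∞ ≤ M
    (hsup : ∀ n : ℕ, ∀ z ∈ Set.Icc a b, Real.sqrt n * |Aseq n z - A z| ≤ M)
    -- increment control around ξ_p
    (hincr : ∀ K > (0:ℝ),
      Tendsto (fun n : ℕ => Real.sqrt n *
        ⨆ u : Set.Icc (-(K / Real.sqrt n)) (K / Real.sqrt n),
          |Aseq n (ξp + u) - Aseq n ξp - A (ξp + u) + A ξp|) atTop (𝓝 0))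
    -- α is bounded and continuous at ξ_p, αₙ → α in sup-norm
    (hαbdd : ∃ C, ∀ z, |α z| ≤ C)
    (hαcont : ContinuousAt α ξp)
    (hαconv : TendstoUniformlyOn αseq α atTop (Set.Icc a b))
    -- x n = Φ_p(Aₙ) and y n = Φ_p(Aₙ + n^{-1/2} αₙ): quantile selections
    (hx : ∀ n, x n ∈ Set.Ioc a b ∧
      Function.leftLim (Aseq n) (x n) ≤ p ∧ p ≤ Aseq n (x n))
    (hy : ∀ n, y n ∈ Set.Ioc a b ∧
      Function.leftLim (fun z => Aseq n z + (Real.sqrt n)⁻¹ * αseq n z) (y n) ≤ p ∧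
      p ≤ Aseq n (y n) + (Real.sqrt n)⁻¹ * αseq n (y n)) :
    Tendsto (fun n : ℕ => Real.sqrt n * (y n - x n)) atTop
      (𝓝 (-(α ξp) / deriv A ξp)) := by
  set c := deriv A ξp with hc
  set r : ℕ → ℝ := fun n => (Real.sqrt n)⁻¹ with hrdef
  set T : ℕ → ℝ → ℝ := fun n z => Aseq n z + r n * αseq n z with hTdef
  set L : ℝ := -(α ξp) / c with hLdef
  have hab : a < b := hξp.1.trans hξp.2
  obtain ⟨C, hC⟩ := hαbdd
  have hC0 : 0 ≤ C := (abs_nonneg _).trans (hC ξp)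
  -- sqrt basics
  have hsqrt_tendsto : Tendsto (fun n : ℕ => Real.sqrt n) atTop atTop := by
    apply tendsto_atTop_atTop.2
    intro q
    refine ⟨⌈q⌉₊ ^ 2, fun n hn => ?_⟩
    have h1 : ((⌈q⌉₊:ℝ))^2 ≤ (n:ℝ) := by exact_mod_cast hn
    calc q ≤ (⌈q⌉₊:ℝ) := Nat.le_ceil q
      _ = Real.sqrt (((⌈q⌉₊:ℝ))^2) := (Real.sqrt_sq (Nat.cast_nonneg _)).symm
      _ ≤ Real.sqrt n := Real.sqrt_le_sqrt h1
  have hr_tendsto : Tendsto r atTop (𝓝 0) := hsqrt_tendsto.inv_tendsto_atTop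
  have hSpos : ∀ n : ℕ, 1 ≤ n → 0 < Real.sqrt n := by
    intro n hn
    exact Real.sqrt_pos.2 (by exact_mod_cast Nat.pos_of_ne_zero (by omega))
  have hrpos : ∀ n : ℕ, 1 ≤ n → 0 < r n := fun n hn => inv_pos.2 (hSpos n hn)
  have hSr : ∀ n : ℕ, 1 ≤ n → Real.sqrt n * r n = 1 := fun n hn =>
    mul_inv_cancel₀ (hSpos n hn).ne'
  -- mean value control
  have hMVT : ∀ γ > (0:ℝ), ∃ δ > 0, Set.Icc (ξp - δ) (ξp + δ) ⊆ Set.Ioo a b ∧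
      ∀ u ∈ Set.Icc (ξp - δ) (ξp + δ), ∀ v ∈ Set.Icc (ξp - δ) (ξp + δ),
        |A v - A u - c * (v - u)| ≤ γ * |v - u| := by
    intro γ hγ
    obtain ⟨U, hU, hUdiff⟩ := hdiff
    have hball : Metric.closedBall c γ ∈ 𝓝 (deriv A ξp) := by
      rw [← hc]; exact Metric.closedBall_mem_nhds c hγ
    have hpre : (deriv A) ⁻¹' Metric.closedBall c γ ∈ 𝓝 ξp := hderivcont hball
    have hV : (U ∩ (deriv A) ⁻¹' Metric.closedBall c γ ∩ Set.Ioo a b) ∈ 𝓝 ξp :=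
      Filter.inter_mem (Filter.inter_mem hU hpre) (Ioo_mem_nhds hξp.1 hξp.2)
    obtain ⟨ε, hεpos, hεsub⟩ := Metric.mem_nhds_iff.1 hV
    refine ⟨ε/2, by linarith, ?_, ?_⟩
    · intro z hz
      have : z ∈ Metric.ball ξp ε := by
        rw [Metric.mem_ball, Real.dist_eq, abs_lt]
        constructor <;> [linarith [hz.1]; linarith [hz.2]]
      exact (hεsub this).2
    · intro u hu v hv
      have hmem : ∀ z ∈ Set.Icc (ξp - ε/2) (ξp + ε/2),
          z ∈ U ∩ (deriv A) ⁻¹' Metric.closedBall c γ ∩ Set.Ioo a b := by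
        intro z hz
        apply hεsub
        rw [Metric.mem_ball, Real.dist_eq, abs_lt]
        constructor <;> [linarith [hz.1]; linarith [hz.2]]
      have hder : ∀ z ∈ Set.Icc (ξp - ε/2) (ξp + ε/2),
          HasDerivWithinAt (fun w => A w - c * w) (deriv A z - c)
            (Set.Icc (ξp - ε/2) (ξp + ε/2)) z := by
        intro z hz
        have hd : DifferentiableAt ℝ A z := hUdiff z (hmem z hz).1.1
        exact ((hd.hasDerivAt.sub (by simpa using (hasDerivAt_id z).const_mul c))).hasDerivWithinAt
      have hbd : ∀ z ∈ Set.Icc (ξp - ε/2) (ξp + ε/2), ‖deriv A z - c‖ ≤ γ := by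
        intro z hz
        have := (hmem z hz).1.2
        rwa [Set.mem_preimage, Metric.mem_closedBall, Real.dist_eq] at this
      have := (convex_Icc _ _).norm_image_sub_le_of_norm_hasDerivWithin_le hder hbd hu hv
      rw [Real.norm_eq_abs, Real.norm_eq_abs] at this
      calc |A v - A u - c * (v - u)| = |(A v - c * v) - (A u - c * u)| := by ring_nf
        _ ≤ γ * |v - u| := this
  -- eventual uniform closeness of αseq to α
  have hαu : ∀ ε > (0:ℝ), ∀ᶠ n in atTop, ∀ z ∈ Set.Icc a b, |αseq n z - α z| ≤ ε := by
    intro ε hε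
    filter_upwards [Metric.tendstoUniformlyOn_iff.1 hαconv ε hε] with n hn z hz
    have := hn z hz
    rw [Real.dist_eq, abs_sub_comm] at this
    exact this.le
  -- sup-norm bound at the r-scale
  have hAnbound : ∀ n : ℕ, 1 ≤ n → ∀ z ∈ Set.Icc a b, |Aseq n z - A z| ≤ M * r n := by
    intro n hn z hz
    have h1 := hsup n z hz
    calc |Aseq n z - A z| = |Aseq n z - A z| * (Real.sqrt n * r n) := by
          rw [hSr n hn, mul_one]
      _ = (Real.sqrt n * |Aseq n z - A z|) * r n := by ring
      _ ≤ M * r n := mul_le_mul_of_nonneg_right h1 (hrpos n hn).le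
  -- rate of convergence of x n and y n to ξp
  obtain ⟨K, hKpos, hKrate⟩ : ∃ K > (0:ℝ),
      ∀ᶠ n in atTop, |x n - ξp| ≤ K * r n ∧ |y n - ξp| ≤ K * r n := by
    obtain ⟨δ₀, hδ₀pos, hδ₀sub, hδ₀mvt⟩ := hMVT (c/2) (by linarith)
    set D : ℝ := M + C + 1 with hDdef
    have hD : 0 < D := by linarith
    have hKpos : 0 < 4*D/c := by positivity
    refine ⟨4*D/c, hKpos, ?_⟩
    have hev1 : ∀ᶠ n : ℕ in atTop, r n < δ₀ / (4*D/c) :=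
      hr_tendsto.eventually_lt_const (by positivity)
    filter_upwards [hev1, eventually_ge_atTop 1, hαu 1 one_pos] with n hn1 hn2 hn3
    have hrp := hrpos n hn2
    have hrn : (Real.sqrt n)⁻¹ = r n := rfl
    set ρ : ℝ := 4*D/c * r n with hρdef
    have hρpos : 0 < ρ := by positivity
    have hKr : ρ ≤ δ₀ := by
      rw [lt_div_iff₀ hKpos] at hn1
      calc ρ = r n * (4*D/c) := mul_comm _ _
        _ ≤ δ₀ := hn1.le
    have hcρ : (c/2) * ρ = 2 * (D * r n) := by
      rw [hρdef]
      field_simp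
      ring
    have hDr : D * r n = M * r n + C * r n + r n := by rw [hDdef]; ring
    have hCr : 0 ≤ C * r n := mul_nonneg hC0 hrp.le
    have hMr : 0 < M * r n := mul_pos hM hrp
    -- membership of window points
    have hwmem : ∀ w : ℝ, |w - ξp| ≤ ρ → w ∈ Set.Icc a b ∧ w ∈ Set.Icc (ξp - δ₀) (ξp + δ₀) := by
      intro w hw
      rw [abs_le] at hw
      have hmem : w ∈ Set.Icc (ξp - δ₀) (ξp + δ₀) := ⟨by linarith [hw.1], by linarith [hw.2]⟩
      exact ⟨⟨(hδ₀sub hmem).1.le, (hδ₀sub hmem).2.le⟩, hmem⟩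
    have hξmem : ξp ∈ Set.Icc (ξp - δ₀) (ξp + δ₀) := ⟨by linarith, by linarith⟩
    -- values of A at ξp ± ρ
    have hwp := hwmem (ξp + ρ) (by rw [add_sub_cancel_left, abs_of_pos hρpos])
    have hwm := hwmem (ξp - ρ) (by
      have : ξp - ρ - ξp = -ρ := by ring
      rw [this, abs_neg, abs_of_pos hρpos])
    have hAp : p + 2 * (D * r n) ≤ A (ξp + ρ) := by
      have h := hδ₀mvt ξp hξmem (ξp + ρ) hwp.2
      rw [add_sub_cancel_left, abs_of_pos hρpos] at h
      have h' := (abs_le.1 h).1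
      nlinarith [hcρ]
    have hAm : A (ξp - ρ) ≤ p - 2 * (D * r n) := by
      have h := hδ₀mvt ξp hξmem (ξp - ρ) hwm.2
      have he : ξp - ρ - ξp = -ρ := by ring
      rw [he, abs_neg, abs_of_pos hρpos] at h
      have h' := (abs_le.1 h).2
      nlinarith [hcρ]
    -- bound for the perturbed sequence
    have hTb : ∀ z ∈ Set.Icc a b, |(Aseq n z + r n * αseq n z) - A z| ≤ D * r n := by
      intro z hz
      have h1 := hAnbound n hn2 z hz
      have h2 : |αseq n z| ≤ C + 1 := by
        calc |αseq n z| = |(αseq n z - α z) + α z| := by ring_nf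
          _ ≤ |αseq n z - α z| + |α z| := abs_add_le _ _
          _ ≤ C + 1 := by linarith [hn3 z hz, hC z]
      calc |(Aseq n z + r n * αseq n z) - A z|
          = |(Aseq n z - A z) + r n * αseq n z| := by ring_nf
        _ ≤ |Aseq n z - A z| + |r n * αseq n z| := abs_add_le _ _
        _ ≤ M * r n + r n * (C + 1) := by
            refine add_le_add h1 ?_
            rw [abs_mul, abs_of_pos hrp]
            exact mul_le_mul_of_nonneg_left h2 hrp.le
        _ = D * r n := by rw [hDdef]; ring
    constructor
    · -- bound for x
      rw [abs_le]
      constructor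
      · -- lower bound
        by_contra hcon
        push_neg at hcon
        have hxw : x n < ξp - ρ := by linarith [hcon]
        have hxmem : x n ∈ Set.Icc a b := ⟨(hx n).1.1.le, (hx n).1.2⟩
        have h1 : Aseq n (x n) ≤ Aseq n (ξp - ρ) := hAnmono n hxmem hwm.1 hxw.le
        have h2 := (abs_le.1 (hAnbound n hn2 (ξp - ρ) hwm.1)).2
        linarith [(hx n).2.2, hAm, hDr, hCr, hMr]
      · -- upper bound
        by_contra hcon
        push_neg at hcon
        have h1 : Aseq n (ξp + ρ) ≤ p :=
          monotoneOn_le_of_leftLim_le (hAnmono n) (hx n).1 hwp.1 (by linarith [hcon]) (hx n).2.1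
        have h2 := (abs_le.1 (hAnbound n hn2 (ξp + ρ) hwp.1)).1
        linarith [hAp, hDr, hCr, hMr]
    · -- bound for y
      rw [abs_le]
      constructor
      · by_contra hcon
        push_neg at hcon
        have hyw : y n < ξp - ρ := by linarith [hcon]
        have hymem : y n ∈ Set.Icc a b := ⟨(hy n).1.1.le, (hy n).1.2⟩
        have h1 : Aseq n (y n) + (Real.sqrt n)⁻¹ * αseq n (y n)
            ≤ Aseq n (ξp - ρ) + (Real.sqrt n)⁻¹ * αseq n (ξp - ρ) :=
          hAtnmono n hymem hwm.1 hyw.le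
        rw [hrn] at h1
        have h2 := (abs_le.1 (hTb (ξp - ρ) hwm.1)).2
        have h3 := (hy n).2.2
        rw [hrn] at h3
        linarith [hAm, hDr, hCr, hMr]
      · by_contra hcon
        push_neg at hcon
        have h1 : (fun z => Aseq n z + (Real.sqrt n)⁻¹ * αseq n z) (ξp + ρ) ≤ p :=
          monotoneOn_le_of_leftLim_le (f := fun z => Aseq n z + (Real.sqrt n)⁻¹ * αseq n z)
            (hAtnmono n) (hy n).1 hwp.1 (by linarith [hcon]) (hy n).2.1
        simp only [] at h1
        rw [hrn] at h1
        have h2 := (abs_le.1 (hTb (ξp + ρ) hwp.1)).1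
        linarith [hAp, hDr, hCr, hMr]
  -- increment control
  set E : ℕ → ℝ := fun n =>
    ⨆ u : Set.Icc (-((K+1) / Real.sqrt n)) ((K+1) / Real.sqrt n),
      |Aseq n (ξp + u) - Aseq n ξp - A (ξp + u) + A ξp| with hEdef
  have hE : Tendsto (fun n : ℕ => Real.sqrt n * E n) atTop (𝓝 0) :=
    hincr (K+1) (by linarith)
  have hEbound : ∀ᶠ n in atTop, ∀ u : ℝ, |u| ≤ (K+1) * r n →
      |Aseq n (ξp + u) - Aseq n ξp - A (ξp + u) + A ξp| ≤ E n := by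
    have hδ1 : (0:ℝ) < min (ξp - a) (b - ξp) := lt_min (by linarith [hξp.1]) (by linarith [hξp.2])
    have hev1 : ∀ᶠ n : ℕ in atTop, r n < min (ξp - a) (b - ξp) / (K + 1) :=
      hr_tendsto.eventually_lt_const (by positivity)
    filter_upwards [hev1, eventually_ge_atTop 1] with n hn1 hn2 u hu
    have hwin : (K + 1) * r n ≤ min (ξp - a) (b - ξp) := by
      rw [lt_div_iff₀ (by linarith : (0:ℝ) < K + 1)] at hn1
      linarith [hn1]
    have hmemz : ∀ v : ℝ, |v| ≤ (K + 1) * r n → ξp + v ∈ Set.Icc a b := by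
      intro v hv
      rw [abs_le] at hv
      constructor
      · have := le_min_iff.1 hwin
        linarith [this.1, hv.1]
      · have := le_min_iff.1 hwin
        linarith [this.2, hv.2]
    have hrw : (K + 1) / Real.sqrt n = (K + 1) * r n := div_eq_mul_inv _ _
    have humem : u ∈ Set.Icc (-((K+1) / Real.sqrt n)) ((K+1) / Real.sqrt n) := by
      rw [hrw, Set.mem_Icc]
      exact ⟨neg_le_of_abs_le hu, le_of_abs_le hu⟩
    have hbdd : BddAbove (Set.range fun v : Set.Icc (-((K+1) / Real.sqrt n)) ((K+1) / Real.sqrt n) =>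
        |Aseq n (ξp + (v:ℝ)) - Aseq n ξp - A (ξp + (v:ℝ)) + A ξp|) := by
      refine ⟨2 * M * r n, ?_⟩
      rintro w ⟨v, rfl⟩
      have hv : |(v:ℝ)| ≤ (K + 1) * r n :=
        (abs_le.2 ⟨v.2.1, v.2.2⟩).trans_eq hrw
      have b1 := hAnbound n hn2 _ (hmemz v hv)
      have b2 := hAnbound n hn2 ξp ⟨hξp.1.le, hξp.2.le⟩
      calc |Aseq n (ξp + (v:ℝ)) - Aseq n ξp - A (ξp + (v:ℝ)) + A ξp|
          = |(Aseq n (ξp + (v:ℝ)) - A (ξp + (v:ℝ))) - (Aseq n ξp - A ξp)| := by ring_nf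
        _ ≤ |Aseq n (ξp + (v:ℝ)) - A (ξp + (v:ℝ))| + |Aseq n ξp - A ξp| := abs_sub _ _
        _ ≤ M * r n + M * r n := add_le_add b1 b2
        _ = 2 * M * r n := by ring
    exact le_ciSup hbdd (⟨u, humem⟩ : Set.Icc (-((K+1) / Real.sqrt n)) ((K+1) / Real.sqrt n))
  -- main estimate
  have key : ∀ η : ℝ, 0 < η → η ≤ 1 →
      ∀ᶠ n : ℕ in atTop, |Real.sqrt n * (y n - x n) - L| ≤ η := by
    intro η hη hη1
    have h8 : (0:ℝ) < c * η / 8 := by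
      have := mul_pos hderivpos hη
      linarith
    obtain ⟨γ, hγpos, hγterm⟩ : ∃ γ > (0:ℝ), γ * (2*K + 2) = c * η / 8 := by
      refine ⟨c * η / (8 * (2*K + 2)), div_pos (mul_pos hderivpos hη) (by linarith), ?_⟩
      field_simp
    obtain ⟨δ, hδpos, hδsub, hδmvt⟩ := hMVT γ hγpos
    obtain ⟨δ', hδ'pos, hδ'⟩ : ∃ δ' > 0, ∀ z : ℝ, |z - ξp| ≤ δ' → |α z - α ξp| ≤ c * η / 8 := by
      obtain ⟨δ', hδ'pos, hball⟩ :=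
        Metric.mem_nhds_iff.1 (hαcont (Metric.ball_mem_nhds (α ξp) h8))
      refine ⟨δ'/2, by linarith, fun z hz => ?_⟩
      have hz2 : z ∈ Metric.ball ξp δ' := by
        rw [Metric.mem_ball, Real.dist_eq]; linarith
      have := hball hz2
      rw [Set.mem_preimage, Metric.mem_ball, Real.dist_eq] at this
      exact this.le
    have hδa : a < ξp - δ ∧ ξp + δ < b := by
      have h1 := hδsub ⟨le_refl _, by linarith⟩
      have h2 := hδsub ⟨by linarith, le_refl _⟩
      exact ⟨h1.1, h2.2⟩
    have hEsm : ∀ᶠ n : ℕ in atTop, Real.sqrt n * E n < c * η / 16 :=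
      hE.eventually_lt_const (by linarith)
    have hwinev : ∀ᶠ n : ℕ in atTop, (K + 1) * r n ≤ min δ δ' := by
      have := hr_tendsto.eventually_lt_const
        (show (0:ℝ) < min δ δ' / (K + 1) by positivity)
      filter_upwards [this] with n hn
      rw [lt_div_iff₀ (show (0:ℝ) < K + 1 by linarith)] at hn
      calc (K + 1) * r n = r n * (K + 1) := mul_comm _ _
        _ ≤ min δ δ' := hn.le
    filter_upwards [hKrate, eventually_ge_atTop 1, hαu (c * η / 8) h8, hEbound, hEsm, hwinev]
      with n hrate hn1 hα1 hEb hEsm1 hwin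
    have hS := hSpos n hn1
    have hrp := hrpos n hn1
    have hSrn := hSr n hn1
    have hrn : (Real.sqrt n)⁻¹ = r n := rfl
    have hwinδ : (K + 1) * r n ≤ δ := hwin.trans (min_le_left _ _)
    have hwinδ' : (K + 1) * r n ≤ δ' := hwin.trans (min_le_right _ _)
    have hKr1 : K * r n ≤ (K + 1) * r n := by linarith [hrp]
    -- E-control at the r n scale
    have hEr : E n ≤ (c * η / 16) * r n := by
      calc E n = E n * (Real.sqrt n * r n) := by rw [hSrn, mul_one]
        _ = (Real.sqrt n * E n) * r n := by ring
        _ ≤ (c * η / 16) * r n := mul_le_mul_of_nonneg_right hEsm1.le hrp.le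
    -- the central comparison inequality
    have hkey : ∀ s w : ℝ, s ∈ Set.Icc a b → w ∈ Set.Icc a b →
        |s - ξp| ≤ (K + 1) * r n → |w - ξp| ≤ (K + 1) * r n →
        c * (s - w) ≤ Aseq n s - Aseq n w + 2 * E n + γ * ((2*K + 2) * r n) := by
      intro s w hsm hwm hsx hwx
      have hEs := hEb (s - ξp) hsx
      have hEw := hEb (w - ξp) hwx
      have e1 : ξp + (s - ξp) = s := by ring
      have e2 : ξp + (w - ξp) = w := by ring
      rw [e1] at hEs
      rw [e2] at hEw
      have hsw1 : s ∈ Set.Icc (ξp - δ) (ξp + δ) := by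
        have := abs_le.1 (hsx.trans hwinδ)
        exact ⟨by linarith [this.1], by linarith [this.2]⟩
      have hww1 : w ∈ Set.Icc (ξp - δ) (ξp + δ) := by
        have := abs_le.1 (hwx.trans hwinδ)
        exact ⟨by linarith [this.1], by linarith [this.2]⟩
      have hmvt := hδmvt w hww1 s hsw1
      have hsw : |s - w| ≤ (2*K + 2) * r n := by
        calc |s - w| = |(s - ξp) - (w - ξp)| := by ring_nf
          _ ≤ |s - ξp| + |w - ξp| := abs_sub _ _
          _ ≤ (2*K + 2) * r n := by linarith [hsx, hwx]
      have hγsw : γ * |s - w| ≤ γ * ((2*K + 2) * r n) :=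
        mul_le_mul_of_nonneg_left hsw hγpos.le
      have a1 := (abs_le.1 hEs).1
      have a2 := (abs_le.1 hEw).2
      have a3 := (abs_le.1 hmvt).1
      linarith
    have hγr : γ * ((2*K + 2) * r n) = (c * η / 8) * r n := by
      rw [← mul_assoc, hγterm]
    have hcL : c * L = -α ξp := by
      rw [hLdef]
      field_simp [hderivpos.ne']
    have hxmem : x n ∈ Set.Icc a b := ⟨(hx n).1.1.le, (hx n).1.2⟩
    have hymem : y n ∈ Set.Icc a b := ⟨(hy n).1.1.le, (hy n).1.2⟩
    have hxK : |x n - ξp| ≤ (K + 1) * r n := hrate.1.trans hKr1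
    have hyK : |y n - ξp| ≤ (K + 1) * r n := hrate.2.trans hKr1
    -- UPPER bound: √n (y n - x n) ≤ L + η
    have upper : Real.sqrt n * (y n - x n) - L ≤ η := by
      set s : ℝ := y n - (η/2) * r n with hsdef
      clear_value s
      have hslt : s < y n := by
        have : 0 < (η/2) * r n := mul_pos (by linarith) hrp
        rw [hsdef]; linarith
      have hsK : |s - ξp| ≤ (K + 1) * r n := by
        have h1 : |s - ξp| ≤ |y n - ξp| + (η/2) * r n := by
          calc |s - ξp| = |(y n - ξp) + (-((η/2) * r n))| := by rw [hsdef]; ring_nf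
            _ ≤ |y n - ξp| + |(-((η/2) * r n))| := abs_add_le _ _
            _ = |y n - ξp| + (η/2) * r n := by
                rw [abs_neg, abs_of_pos (mul_pos (by linarith : (0:ℝ) < η/2) hrp)]
        have h2 : (η/2) * r n ≤ 1 * r n :=
          mul_le_mul_of_nonneg_right (by linarith) hrp.le
        calc |s - ξp| ≤ |y n - ξp| + (η/2) * r n := h1
          _ ≤ K * r n + 1 * r n := by linarith [hrate.2, h2]
          _ = (K + 1) * r n := by ring
      have hsmem : s ∈ Set.Icc a b := by
        have h1 := (abs_le.1 (hsK.trans hwinδ)).1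
        exact ⟨by linarith [hδa.1], hslt.le.trans hymem.2⟩
      have hTs : (fun z => Aseq n z + (Real.sqrt n)⁻¹ * αseq n z) s ≤ p :=
        monotoneOn_le_of_leftLim_le (f := fun z => Aseq n z + (Real.sqrt n)⁻¹ * αseq n z)
          (hAtnmono n) (hy n).1 hsmem hslt (hy n).2.1
      simp only [] at hTs
      rw [hrn] at hTs
      have hpx := (hx n).2.2
      have hk := hkey s (x n) hsmem hxmem hsK hxK
      -- α at s
      have hαs : -αseq n s ≤ -α ξp + c * η / 4 := by
        have h1 := hα1 s hsmem
        have h2 := hδ' s (hsK.trans hwinδ')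
        have h3 := (abs_le.1 h1).1
        have h4 := (abs_le.1 h2).1
        linarith
      have hαmul : r n * (-αseq n s) ≤ r n * (-α ξp + c * η / 4) :=
        mul_le_mul_of_nonneg_left hαs hrp.le
      have hring : c * (y n - x n) = c * (s - x n) + c * ((η/2) * r n) := by
        rw [hsdef]; ring
      have hmain : c * (y n - x n) ≤ r n * (-α ξp + c * η) := by
        nlinarith [hk, hTs, hpx, hαmul, hEr, hγr, hring]
      have hSmul := mul_le_mul_of_nonneg_left hmain (Real.sqrt_nonneg n)
      have hcollapse : Real.sqrt n * (r n * (-α ξp + c * η)) = -α ξp + c * η := by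
        rw [← mul_assoc, hSrn, one_mul]
      rw [hcollapse] at hSmul
      have hfin : c * (Real.sqrt n * (y n - x n) - L) ≤ c * η := by
        have : c * (Real.sqrt n * (y n - x n) - L)
            = Real.sqrt n * (c * (y n - x n)) - c * L := by ring
        rw [this, hcL]
        linarith [hSmul]
      exact (mul_le_mul_iff_right₀ hderivpos).1 hfin
    -- LOWER bound: L - η ≤ √n (y n - x n)
    have lower : L - Real.sqrt n * (y n - x n) ≤ η := by
      set s : ℝ := x n - (η/2) * r n with hsdef
      clear_value s
      have hslt : s < x n := by
        have : 0 < (η/2) * r n := mul_pos (by linarith) hrp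
        rw [hsdef]; linarith
      have hsK : |s - ξp| ≤ (K + 1) * r n := by
        have h1 : |s - ξp| ≤ |x n - ξp| + (η/2) * r n := by
          calc |s - ξp| = |(x n - ξp) + (-((η/2) * r n))| := by rw [hsdef]; ring_nf
            _ ≤ |x n - ξp| + |(-((η/2) * r n))| := abs_add_le _ _
            _ = |x n - ξp| + (η/2) * r n := by
                rw [abs_neg, abs_of_pos (mul_pos (by linarith : (0:ℝ) < η/2) hrp)]
        have h2 : (η/2) * r n ≤ 1 * r n :=
          mul_le_mul_of_nonneg_right (by linarith) hrp.le
        calc |s - ξp| ≤ |x n - ξp| + (η/2) * r n := h1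
          _ ≤ K * r n + 1 * r n := by linarith [hrate.1, h2]
          _ = (K + 1) * r n := by ring
      have hsmem : s ∈ Set.Icc a b := by
        have h1 := (abs_le.1 (hsK.trans hwinδ)).1
        exact ⟨by linarith [hδa.1], hslt.le.trans hxmem.2⟩
      have hAs : Aseq n s ≤ p :=
        monotoneOn_le_of_leftLim_le (f := Aseq n)
          (hAnmono n) (hx n).1 hsmem hslt (hx n).2.1
      have hpy := (hy n).2.2
      rw [hrn] at hpy
      have hk := hkey s (y n) hsmem hymem hsK hyK
      have hαy : αseq n (y n) ≤ α ξp + c * η / 4 := by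
        have h1 := hα1 (y n) hymem
        have h2 := hδ' (y n) (hyK.trans hwinδ')
        have h3 := (abs_le.1 h1).2
        have h4 := (abs_le.1 h2).2
        linarith
      have hαmul : r n * αseq n (y n) ≤ r n * (α ξp + c * η / 4) :=
        mul_le_mul_of_nonneg_left hαy hrp.le
      have hring : c * (x n - y n) = c * (s - y n) + c * ((η/2) * r n) := by
        rw [hsdef]; ring
      have hmain : c * (x n - y n) ≤ r n * (α ξp + c * η) := by
        nlinarith [hk, hAs, hpy, hαmul, hEr, hγr, hring]
      have hSmul := mul_le_mul_of_nonneg_left hmain (Real.sqrt_nonneg n)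
      have hcollapse : Real.sqrt n * (r n * (α ξp + c * η)) = α ξp + c * η := by
        rw [← mul_assoc, hSrn, one_mul]
      rw [hcollapse] at hSmul
      have hfin : c * (L - Real.sqrt n * (y n - x n)) ≤ c * η := by
        have : c * (L - Real.sqrt n * (y n - x n))
            = c * L + Real.sqrt n * (c * (x n - y n)) := by ring
        rw [this, hcL]
        linarith [hSmul]
      exact (mul_le_mul_iff_right₀ hderivpos).1 hfin
    exact abs_le.2 ⟨by linarith [lower], upper⟩
  rw [Metric.tendsto_atTop]
  intro ε hε
  have hη : (0:ℝ) < min (ε/2) 1 := lt_min (by linarith) one_pos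
  obtain ⟨N, hN⟩ := (eventually_atTop.1 (key (min (ε/2) 1) hη (min_le_right _ _)))
  refine ⟨N, fun n hn => ?_⟩
  have := hN n hn
  rw [Real.dist_eq]
  calc |Real.sqrt n * (y n - x n) - L| ≤ min (ε/2) 1 := this
    _ ≤ ε/2 := min_le_left _ _
    _ < ε := by linarith
end
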